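/- The decreasing mean residual life order is not preserved by all distortion functions: let X and Y be the nonnegative random variables with quantile functions F^{-1}(p) = (17/8)p − (1/2)p² and G^{-1}(p) = ln(15/8 + p) for p ∈ (0,1), and let h(p) = p⁵. Then X ≤_dmrl Y, but X_h ≤_dmrl Y_h fails. -/

import Mathlib

open MeasureTheory Set Filter

/-- The (generalized inverse) quantile function of a distribution function `F`. -/
noncomputable def quantile (F : ℝ → ℝ) (p : ℝ) : ℝ := sInf {x : ℝ | p ≤ F x}

/-- `F` is the distribution function of a nonnegative random variable
(with total mass one). -/
def IsNonnegCDF (F : ℝ → ℝ) : Prop :=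
  Monotone F ∧ (∀ x : ℝ, x ≤ 0 → F x = 0) ∧ Tendsto F atTop (nhds 1)

/-- A distortion function: a left-continuous increasing map of `[0,1]` onto itself
with `h 0 = 0` and `h 1 = 1`. -/
def IsDistortionFn (h : ℝ → ℝ) : Prop :=
  MonotoneOn h (Icc 0 1) ∧ (∀ p ∈ Ioc (0:ℝ) 1, ContinuousWithinAt h (Iio p) p) ∧
    h 0 = 0 ∧ h 1 = 1 ∧ MapsTo h (Icc 0 1) (Icc 0 1)

/-- `h` is starshaped: `h p / p` is increasing on `(0,1]`. -/
def Starshaped (h : ℝ → ℝ) : Prop := MonotoneOn (fun p => h p / p) (Ioc 0 1)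

/-- `h` is antistarshaped: `h p / p` is decreasing on `(0,1]`. -/
def Antistarshaped (h : ℝ → ℝ) : Prop := AntitoneOn (fun p => h p / p) (Ioc 0 1)

/-- Distribution function of the distorted random variable `X_h`,
whose survival function is `h ∘ (1 - F)`. -/
noncomputable def distortedCDF (h F : ℝ → ℝ) : ℝ → ℝ := fun x => 1 - h (1 - F x)

/-- `∫_0^{F⁻¹(p)} (1 - F(x)) dx`. -/
noncomputable def tttIntegral (F : ℝ → ℝ) (p : ℝ) : ℝ :=
  ∫ x in (0:ℝ)..(quantile F p), (1 - F x)

/-- `∫_{F⁻¹(p)}^∞ (1 - F(x)) dx`. -/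
noncomputable def ewIntegral (F : ℝ → ℝ) (p : ℝ) : ℝ :=
  ∫ x in Ioi (quantile F p), (1 - F x)

/-- `∫_0^{F⁻¹(p)} F(x) dx`. -/
noncomputable def mitIntegral (F : ℝ → ℝ) (p : ℝ) : ℝ :=
  ∫ x in (0:ℝ)..(quantile F p), F x

/-- Total time on test transform order. -/
def TTT_le (F G : ℝ → ℝ) : Prop := ∀ p ∈ Ioo (0:ℝ) 1, tttIntegral F p ≤ tttIntegral G p

/-- Excess wealth order. -/
def EW_le (F G : ℝ → ℝ) : Prop := ∀ p ∈ Ioo (0:ℝ) 1, ewIntegral F p ≤ ewIntegral G p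

/-- Decreasing mean residual life order. -/
def DMRL_le (F G : ℝ → ℝ) : Prop :=
  MonotoneOn (fun p => ewIntegral G p / ewIntegral F p) (Ioo (0:ℝ) 1)

/-- Quantile mean inactivity time order. -/
def QMIT_le (F G : ℝ → ℝ) : Prop :=
  AntitoneOn (fun p => mitIntegral F p / mitIntegral G p) (Ioo (0:ℝ) 1)

/-- The distribution function of the random variable `X` of Example 1, whose quantile
function on `(0,1)` is `F⁻¹(p) = (17/8) p - (1/2) p²`. -/
noncomputable def Fex : ℝ → ℝ := fun x => max 0 (min 1 (17/8 - Real.sqrt (289/64 - 2*x)))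

/-- The distribution function of the random variable `Y` of Example 1, whose quantile
function on `(0,1)` is `G⁻¹(p) = ln(15/8 + p)`. -/
noncomputable def Gex : ℝ → ℝ := fun x => max 0 (min 1 (Real.exp x - 15/8))

/-! ### Auxiliary definitions and lemmas -/

noncomputable def phiF : ℝ → ℝ := fun p => 17/8 * p - 1/2 * p ^ 2
noncomputable def phiG : ℝ → ℝ := fun p => Real.log (15/8 + p)
noncomputable def Pp : ℝ → ℝ := fun s =>
  5*(23/8)^4*s - 5*(23/8)^3*s^2 + 10/3*(23/8)^2*s^3 - 5/4*(23/8)*s^4 + s^5/5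

lemma quantile_eq {F : ℝ → ℝ} {p q : ℝ} (h1 : p ≤ F q) (h2 : ∀ x, x < q → F x < p) :
    quantile F p = q := by
  have hlb : ∀ x ∈ {x : ℝ | p ≤ F x}, q ≤ x := by
    intro x hx
    by_contra h
    exact absurd hx (not_le.2 (h2 x (not_le.1 h)))
  apply le_antisymm
  · exact csInf_le ⟨q, hlb⟩ h1
  · exact le_csInf ⟨q, h1⟩ hlb

lemma Fex_cont : Continuous Fex := by
  unfold Fex
  fun_prop

lemma Gex_cont : Continuous Gex := by unfold Gex; fun_prop

lemma Fex_phi {v : ℝ} (hv : v ∈ Icc (0:ℝ) 1) : Fex (phiF v) = v := by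
  obtain ⟨h0, h1⟩ := hv
  unfold Fex phiF
  rw [show (289/64 - 2*(17/8*v - 1/2*v^2) : ℝ) = (17/8 - v)^2 by ring,
      Real.sqrt_sq (by linarith), show (17/8 - (17/8 - v) : ℝ) = v by ring,
      min_eq_right h1, max_eq_right h0]

lemma Fex_one {x : ℝ} (hx : 13/8 ≤ x) : Fex x = 1 := by
  have h : Real.sqrt (289/64 - 2*x) ≤ 9/8 := by
    calc Real.sqrt (289/64 - 2*x) ≤ Real.sqrt ((9/8)^2) := Real.sqrt_le_sqrt (by nlinarith)
    _ = 9/8 := Real.sqrt_sq (by norm_num)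
  unfold Fex
  rw [min_eq_left (by linarith), max_eq_right (by norm_num)]

lemma Fex_lt {p x : ℝ} (hp : p ∈ Ioo (0:ℝ) 1) (hx : x < phiF p) : Fex x < p := by
  have h2 : (17/8 - p)^2 < 289/64 - 2*x := by
    unfold phiF at hx; nlinarith
  have h3 : 17/8 - p < Real.sqrt (289/64 - 2*x) := by
    have h := Real.sqrt_lt_sqrt (sq_nonneg _) h2
    rwa [Real.sqrt_sq (by linarith [hp.2])] at h
  unfold Fex
  exact max_lt hp.1 (lt_of_le_of_lt (min_le_right _ _) (by linarith))

lemma quantile_Fex {p : ℝ} (hp : p ∈ Ioo (0:ℝ) 1) : quantile Fex p = phiF p :=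
  quantile_eq (by rw [Fex_phi ⟨hp.1.le, hp.2.le⟩]) (fun x hx => Fex_lt hp hx)

lemma Gex_phi {v : ℝ} (hv : v ∈ Icc (0:ℝ) 1) : Gex (phiG v) = v := by
  obtain ⟨h0, h1⟩ := hv
  unfold Gex phiG
  rw [Real.exp_log (by linarith), show (15/8 + v - 15/8 : ℝ) = v by ring,
      min_eq_right h1, max_eq_right h0]

lemma Gex_one {x : ℝ} (hx : Real.log (23/8) ≤ x) : Gex x = 1 := by
  have h : (23/8:ℝ) ≤ Real.exp x := by
    calc (23/8:ℝ) = Real.exp (Real.log (23/8)) := (Real.exp_log (by norm_num)).symm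
    _ ≤ Real.exp x := Real.exp_le_exp.2 hx
  unfold Gex
  rw [min_eq_left (by linarith), max_eq_right (by norm_num)]

lemma Gex_lt {p x : ℝ} (hp : p ∈ Ioo (0:ℝ) 1) (hx : x < phiG p) : Gex x < p := by
  have h : Real.exp x < 15/8 + p := by
    calc Real.exp x < Real.exp (phiG p) := Real.exp_lt_exp.2 hx
    _ = 15/8 + p := Real.exp_log (by linarith [hp.1])
  unfold Gex
  exact max_lt hp.1 (lt_of_le_of_lt (min_le_right _ _) (by linarith))

lemma quantile_Gex {p : ℝ} (hp : p ∈ Ioo (0:ℝ) 1) : quantile Gex p = phiG p :=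
  quantile_eq (by rw [Gex_phi ⟨hp.1.le, hp.2.le⟩]) (fun x hx => Gex_lt hp hx)

lemma Fex_le_one (x : ℝ) : Fex x ≤ 1 := max_le (by norm_num) (min_le_left _ _)
lemma Gex_le_one (x : ℝ) : Gex x ≤ 1 := max_le (by norm_num) (min_le_left _ _)

lemma quantile_distF {u : ℝ} (hu : u ∈ Ioo (0:ℝ) 1) :
    quantile (distortedCDF (fun q => q^5) Fex) (1 - (1-u)^5) = phiF u := by
  apply quantile_eq
  · simp only [distortedCDF]
    rw [Fex_phi ⟨hu.1.le, hu.2.le⟩]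
  · intro x hx
    have h := Fex_lt hu hx
    simp only [distortedCDF]
    have h1 : 1 - u < 1 - Fex x := by linarith
    have h0 : (0:ℝ) ≤ 1 - u := by linarith [hu.2]
    have := pow_lt_pow_left₀ h1 h0 (by norm_num : 5 ≠ 0)
    linarith

lemma quantile_distG {u : ℝ} (hu : u ∈ Ioo (0:ℝ) 1) :
    quantile (distortedCDF (fun q => q^5) Gex) (1 - (1-u)^5) = phiG u := by
  apply quantile_eq
  · simp only [distortedCDF]
    rw [Gex_phi ⟨hu.1.le, hu.2.le⟩]
  · intro x hx
    have h := Gex_lt hu hx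
    simp only [distortedCDF]
    have h1 : 1 - u < 1 - Gex x := by linarith
    have h0 : (0:ℝ) ≤ 1 - u := by linarith [hu.2]
    have := pow_lt_pow_left₀ h1 h0 (by norm_num : 5 ≠ 0)
    linarith

lemma integral_Ioi_eq {f : ℝ → ℝ} (hf : Continuous f) {q b : ℝ} (hqb : q ≤ b)
    (h0 : ∀ x, b ≤ x → f x = 0) : ∫ x in Ioi q, f x = ∫ x in q..b, f x := by
  rw [intervalIntegral.integral_of_le hqb]
  have hsplit : Ioi q = Ioc q b ∪ Ioi b := (Set.Ioc_union_Ioi_eq_Ioi hqb).symm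
  have hint1 : IntegrableOn f (Ioc q b) := hf.integrableOn_Ioc
  have hint2 : IntegrableOn f (Ioi b) := by
    apply (integrableOn_congr_fun (g := fun _ => (0:ℝ)) (fun x hx => h0 x (le_of_lt hx))
      measurableSet_Ioi).2
    exact integrableOn_zero
  rw [hsplit, setIntegral_union (Ioc_disjoint_Ioi le_rfl) measurableSet_Ioi hint1 hint2]
  have h2 : ∫ x in Ioi b, f x = 0 := by
    rw [setIntegral_congr_fun (g := fun _ => (0:ℝ)) measurableSet_Ioi
      (fun x hx => h0 x (le_of_lt hx))]
    simp
  rw [h2, add_zero]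

lemma hasDerivAt_phiF (v : ℝ) : HasDerivAt phiF (17/8 - v) v := by
  have h := ((hasDerivAt_id v).const_mul (17/8:ℝ)).sub ((hasDerivAt_pow 2 v).const_mul (1/2:ℝ))
  unfold phiF
  refine h.congr_deriv (Eq.symm ?_)
  simp

lemma hasDerivAt_phiG {v : ℝ} (hv : (0:ℝ) < 15/8 + v) : HasDerivAt phiG (1/(15/8+v)) v := by
  have h1 : HasDerivAt (fun v : ℝ => 15/8 + v) 1 v := (hasDerivAt_id v).const_add _
  have h := (Real.hasDerivAt_log (ne_of_gt hv)).comp v h1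
  unfold phiG
  refine h.congr_deriv (Eq.symm ?_)
  simp

lemma ewF_reduce {k : ℝ → ℝ} (hk : Continuous k) (hk1 : k 1 = 0) {u : ℝ}
    (hu : u ∈ Icc (0:ℝ) 1) :
    ∫ x in Ioi (phiF u), k (Fex x) = ∫ v in u..1, (17/8 - v) * k v := by
  have h1 : ∫ x in Ioi (phiF u), k (Fex x) = ∫ x in (phiF u)..(phiF 1), k (Fex x) := by
    apply integral_Ioi_eq (hk.comp Fex_cont)
    · unfold phiF; nlinarith [hu.1, hu.2]
    · intro x hx
      have : (13/8:ℝ) ≤ x := by unfold phiF at hx; linarith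
      simp [Fex_one this, hk1]
  have h2 : ∫ v in u..1, (17/8 - v) • k (Fex (phiF v)) = ∫ x in (phiF u)..(phiF 1), k (Fex x) :=
    intervalIntegral.integral_comp_smul_deriv (fun v _ => hasDerivAt_phiF v)
      (by fun_prop) (hk.comp Fex_cont)
  rw [h1, ← h2]
  apply intervalIntegral.integral_congr
  intro v hv
  rw [uIcc_of_le hu.2] at hv
  have hv' : v ∈ Icc (0:ℝ) 1 := ⟨le_trans hu.1 hv.1, hv.2⟩
  simp [Fex_phi hv', smul_eq_mul]

lemma ewG_reduce {k : ℝ → ℝ} (hk : Continuous k) (hk1 : k 1 = 0) {u : ℝ}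
    (hu : u ∈ Icc (0:ℝ) 1) :
    ∫ x in Ioi (phiG u), k (Gex x) = ∫ v in u..1, (1/(15/8+v)) * k v := by
  have h1 : ∫ x in Ioi (phiG u), k (Gex x) = ∫ x in (phiG u)..(phiG 1), k (Gex x) := by
    apply integral_Ioi_eq (hk.comp Gex_cont)
    · unfold phiG
      apply Real.log_le_log (by linarith [hu.1])
      linarith [hu.2]
    · intro x hx
      have : Real.log (23/8) ≤ x := by
        unfold phiG at hx
        rwa [show (15/8 + 1 : ℝ) = 23/8 by norm_num] at hx
      simp [Gex_one this, hk1]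
  have hd : ∀ v ∈ uIcc u 1, HasDerivAt phiG (1/(15/8+v)) v := by
    intro v hv
    rw [uIcc_of_le hu.2] at hv
    exact hasDerivAt_phiG (by linarith [hu.1, hv.1])
  have hc : ContinuousOn (fun v : ℝ => 1/(15/8+v)) (uIcc u 1) := by
    apply ContinuousOn.div continuousOn_const (by fun_prop)
    intro v hv
    rw [uIcc_of_le hu.2] at hv
    have h15 : (0:ℝ) < 15/8 + v := by linarith [hu.1, hv.1]
    exact ne_of_gt h15
  have h2 : ∫ v in u..1, (1/(15/8+v)) • k (Gex (phiG v)) = ∫ x in (phiG u)..(phiG 1), k (Gex x) :=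
    intervalIntegral.integral_comp_smul_deriv hd hc (hk.comp Gex_cont)
  rw [h1, ← h2]
  apply intervalIntegral.integral_congr
  intro v hv
  rw [uIcc_of_le hu.2] at hv
  have hv' : v ∈ Icc (0:ℝ) 1 := ⟨le_trans hu.1 hv.1, hv.2⟩
  simp [Gex_phi hv', smul_eq_mul]

lemma intF1 (u : ℝ) : ∫ v in u..1, (17/8 - v) * (1 - v)
    = 43/48 - 17/8*u + 25/16*u^2 - u^3/3 := by
  have hd : ∀ v ∈ uIcc u 1, HasDerivAt (fun v : ℝ => 17/8*v - 25/16*v^2 + v^3/3)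
      ((17/8 - v) * (1 - v)) v := by
    intro v _
    have h := (((hasDerivAt_id v).const_mul (17/8:ℝ)).sub
      ((hasDerivAt_pow 2 v).const_mul (25/16:ℝ))).add ((hasDerivAt_pow 3 v).div_const 3)
    refine h.congr_deriv (Eq.symm ?_)
    simp; ring
  rw [intervalIntegral.integral_eq_sub_of_hasDerivAt hd
    ((Continuous.intervalIntegrable (by fun_prop) _ _))]
  ring

lemma intF5 (u : ℝ) : ∫ v in u..1, (17/8 - v) * (1 - v)^5
    = 3/16*(1-u)^6 + (1-u)^7/7 := by
  have hd : ∀ v ∈ uIcc u 1, HasDerivAt (fun v : ℝ => -(3/16*(1-v)^6 + (1-v)^7/7))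
      ((17/8 - v) * (1 - v)^5) v := by
    intro v _
    have h1 : HasDerivAt (fun v : ℝ => (1:ℝ) - v) (-1) v := (hasDerivAt_id v).const_sub 1
    have h := ((h1.pow 6).const_mul (3/16:ℝ)).add ((h1.pow 7).div_const 7) |>.neg
    refine h.congr_deriv (Eq.symm ?_)
    simp; ring
  rw [intervalIntegral.integral_eq_sub_of_hasDerivAt hd
    ((Continuous.intervalIntegrable (by fun_prop) _ _))]
  ring

lemma intG1 {u : ℝ} (hu0 : 0 ≤ u) (hu1 : u ≤ 1) : ∫ v in u..1, (1/(15/8+v)) * (1 - v)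
    = 23/8*(Real.log (23/8) - Real.log (15/8+u)) - (1-u) := by
  have hd : ∀ v ∈ uIcc u 1, HasDerivAt (fun v : ℝ => 23/8 * Real.log (15/8+v) - v)
      ((1/(15/8+v)) * (1 - v)) v := by
    intro v hv
    rw [uIcc_of_le hu1] at hv
    have hvpos : (0:ℝ) < 15/8 + v := by linarith [hv.1]
    have hne : (15/8 + v : ℝ) ≠ 0 := ne_of_gt hvpos
    have hlog : HasDerivAt (fun v : ℝ => Real.log (15/8+v)) (1/(15/8+v)) v := by
      have h1 : HasDerivAt (fun v : ℝ => 15/8 + v) 1 v := (hasDerivAt_id v).const_add _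
      have h := (Real.hasDerivAt_log hne).comp v h1
      refine h.congr_deriv (Eq.symm ?_)
      simp
    have h := (hlog.const_mul (23/8:ℝ)).sub (hasDerivAt_id v)
    refine h.congr_deriv (Eq.symm ?_)
    rw [div_mul_eq_mul_div, mul_one_div, eq_sub_iff_add_eq, div_add' _ _ _ hne,
      div_eq_div_iff hne hne]
    ring
  have hc : ContinuousOn (fun v : ℝ => (1/(15/8+v)) * (1 - v)) (uIcc u 1) := by
    apply ContinuousOn.mul _ (by fun_prop)
    apply ContinuousOn.div continuousOn_const (by fun_prop)
    intro v hv
    rw [uIcc_of_le hu1] at hv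
    have : (0:ℝ) < 15/8 + v := by linarith [hv.1]
    exact ne_of_gt this
  rw [intervalIntegral.integral_eq_sub_of_hasDerivAt hd (hc.intervalIntegrable)]
  rw [show (15/8 + 1 : ℝ) = 23/8 by norm_num]
  ring

lemma intG5 {u : ℝ} (hu0 : 0 ≤ u) (hu1 : u ≤ 1) : ∫ v in u..1, (1/(15/8+v)) * (1 - v)^5
    = (23/8)^5*(Real.log (23/8) - Real.log (15/8+u)) + (Pp (15/8+u) - Pp (23/8)) := by
  have hd : ∀ v ∈ uIcc u 1, HasDerivAt
      (fun v : ℝ => (23/8)^5 * Real.log (15/8+v) - Pp (15/8+v))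
      ((1/(15/8+v)) * (1 - v)^5) v := by
    intro v hv
    rw [uIcc_of_le hu1] at hv
    have hvpos : (0:ℝ) < 15/8 + v := by linarith [hv.1]
    have hne : (15/8 + v : ℝ) ≠ 0 := ne_of_gt hvpos
    have h1 : HasDerivAt (fun v : ℝ => 15/8 + v) 1 v := (hasDerivAt_id v).const_add _
    have hlog : HasDerivAt (fun v : ℝ => Real.log (15/8+v)) (1/(15/8+v)) v := by
      have h := (Real.hasDerivAt_log hne).comp v h1
      refine h.congr_deriv (Eq.symm ?_)
      simp
    have hP := ((((h1.const_mul (5*(23/8)^4:ℝ)).sub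
        ((h1.pow 2).const_mul (5*(23/8)^3:ℝ))).add
        ((h1.pow 3).const_mul (10/3*(23/8)^2:ℝ))).sub
        ((h1.pow 4).const_mul (5/4*(23/8):ℝ))).add ((h1.pow 5).div_const 5)
    have h := (hlog.const_mul ((23/8)^5:ℝ)).sub hP
    have hPp : (fun v : ℝ => (23/8)^5 * Real.log (15/8+v) - Pp (15/8+v)) = (fun x : ℝ =>
        (23/8)^5 * Real.log (15/8+x) - (5*(23/8)^4*(15/8+x) - 5*(23/8)^3*(15/8+x)^2
          + 10/3*(23/8)^2*(15/8+x)^3 - 5/4*(23/8)*(15/8+x)^4 + (15/8+x)^5/5)) := by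
      funext x; rw [Pp]
    rw [hPp]
    refine h.congr_deriv (Eq.symm ?_)
    push_cast
    rw [div_mul_eq_mul_div, mul_one_div, eq_sub_iff_add_eq, div_add' _ _ _ hne,
      div_eq_div_iff hne hne]
    ring
  have hc : ContinuousOn (fun v : ℝ => (1/(15/8+v)) * (1 - v)^5) (uIcc u 1) := by
    apply ContinuousOn.mul _ (by fun_prop)
    apply ContinuousOn.div continuousOn_const (by fun_prop)
    intro v hv
    rw [uIcc_of_le hu1] at hv
    have : (0:ℝ) < 15/8 + v := by linarith [hv.1]
    exact ne_of_gt this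
  rw [intervalIntegral.integral_eq_sub_of_hasDerivAt hd (hc.intervalIntegrable)]
  rw [show (15/8 + 1 : ℝ) = 23/8 by norm_num]
  unfold Pp
  ring

lemma ewF_val {p : ℝ} (hp : p ∈ Ioo (0:ℝ) 1) :
    ewIntegral Fex p = 43/48 - 17/8*p + 25/16*p^2 - p^3/3 := by
  have hred := ewF_reduce (k := fun v => 1 - v) (by fun_prop) (by norm_num)
    ⟨hp.1.le, hp.2.le⟩
  calc ewIntegral Fex p = ∫ x in Ioi (phiF p), (1 - Fex x) := by
        rw [ewIntegral, quantile_Fex hp]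
    _ = ∫ v in p..1, (17/8 - v) * (1 - v) := hred
    _ = _ := intF1 p

lemma ewG_val {p : ℝ} (hp : p ∈ Ioo (0:ℝ) 1) :
    ewIntegral Gex p = 23/8*(Real.log (23/8) - Real.log (15/8+p)) - (1-p) := by
  have hred := ewG_reduce (k := fun v => 1 - v) (by fun_prop) (by norm_num)
    ⟨hp.1.le, hp.2.le⟩
  calc ewIntegral Gex p = ∫ x in Ioi (phiG p), (1 - Gex x) := by
        rw [ewIntegral, quantile_Gex hp]
    _ = ∫ v in p..1, (1/(15/8+v)) * (1 - v) := hred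
    _ = _ := intG1 hp.1.le hp.2.le

lemma ewFh_val {u : ℝ} (hu : u ∈ Ioo (0:ℝ) 1) :
    ewIntegral (distortedCDF (fun q => q^5) Fex) (1 - (1-u)^5)
      = 3/16*(1-u)^6 + (1-u)^7/7 := by
  have hred := ewF_reduce (k := fun v => (1 - v)^5) (by fun_prop) (by norm_num)
    ⟨hu.1.le, hu.2.le⟩
  calc ewIntegral (distortedCDF (fun q => q^5) Fex) (1 - (1-u)^5)
      = ∫ x in Ioi (phiF u), (1 - distortedCDF (fun q => q^5) Fex x) := by
        rw [ewIntegral, quantile_distF hu]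
    _ = ∫ x in Ioi (phiF u), (1 - Fex x)^5 := by
        apply setIntegral_congr_fun measurableSet_Ioi
        intro x _
        simp only [distortedCDF]
        ring
    _ = ∫ v in u..1, (17/8 - v) * (1 - v)^5 := hred
    _ = _ := intF5 u

lemma ewGh_val {u : ℝ} (hu : u ∈ Ioo (0:ℝ) 1) :
    ewIntegral (distortedCDF (fun q => q^5) Gex) (1 - (1-u)^5)
      = (23/8)^5*(Real.log (23/8) - Real.log (15/8+u)) + (Pp (15/8+u) - Pp (23/8)) := by
  have hred := ewG_reduce (k := fun v => (1 - v)^5) (by fun_prop) (by norm_num)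
    ⟨hu.1.le, hu.2.le⟩
  calc ewIntegral (distortedCDF (fun q => q^5) Gex) (1 - (1-u)^5)
      = ∫ x in Ioi (phiG u), (1 - distortedCDF (fun q => q^5) Gex x) := by
        rw [ewIntegral, quantile_distG hu]
    _ = ∫ x in Ioi (phiG u), (1 - Gex x)^5 := by
        apply setIntegral_congr_fun measurableSet_Ioi
        intro x _
        simp only [distortedCDF]
        ring
    _ = ∫ v in u..1, (1/(15/8+v)) * (1 - v)^5 := hred
    _ = _ := intG5 hu.1.le hu.2.le

lemma log_lb5 {x : ℝ} (h0 : 0 ≤ x) (h1 : x < 1) :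
    x + x^2/2 + x^3/3 + x^4/4 + x^5/5 ≤ -Real.log (1-x) := by
  set F : ℝ → ℝ := fun y => -Real.log (1-y) - (y + y^2/2 + y^3/3 + y^4/4 + y^5/5) with hF
  have hd : ∀ y ∈ Ioo (0:ℝ) x, HasDerivAt F (1/(1-y) - (1+y+y^2+y^3+y^4)) y := by
    intro y hy
    have hy1 : (1:ℝ) - y ≠ 0 := by
      have : y < 1 := lt_trans hy.2 h1
      intro hc; linarith [hc]
    have hlog : HasDerivAt (fun y : ℝ => Real.log (1-y)) (-(1/(1-y))) y := by
      have h2 : HasDerivAt (fun y : ℝ => (1:ℝ) - y) (-1) y := (hasDerivAt_id y).const_sub 1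
      have h := (Real.hasDerivAt_log hy1).comp y h2
      refine h.congr_deriv (Eq.symm ?_)
      field_simp
    have hpoly := ((((hasDerivAt_id y).add ((hasDerivAt_pow 2 y).div_const 2)).add
      ((hasDerivAt_pow 3 y).div_const 3)).add ((hasDerivAt_pow 4 y).div_const 4)).add
      ((hasDerivAt_pow 5 y).div_const 5)
    have h := hlog.neg.sub hpoly
    rw [hF]
    refine h.congr_deriv (Eq.symm ?_)
    push_cast
    ring
  have hcont : ContinuousOn F (Icc 0 x) := by
    apply ContinuousOn.sub
    · apply ContinuousOn.neg
      apply ContinuousOn.log (by fun_prop)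
      intro y hy
      have : y < 1 := lt_of_le_of_lt hy.2 h1
      intro hc; linarith [hc]
    · fun_prop
  have hmono : MonotoneOn F (Icc 0 x) := by
    apply monotoneOn_of_deriv_nonneg (convex_Icc 0 x) hcont
    · intro y hy
      rw [interior_Icc] at hy
      exact ((hd y hy).differentiableAt).differentiableWithinAt
    · intro y hy
      rw [interior_Icc] at hy
      rw [(hd y hy).deriv]
      have hy1 : (0:ℝ) < 1 - y := by
        have : y < 1 := lt_trans hy.2 h1
        linarith
      have hkey : (1+y+y^2+y^3+y^4) ≤ 1/(1-y) := by
        rw [le_div_iff₀ hy1]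
        nlinarith [pow_nonneg hy.1.le 5]
      linarith
  have h := hmono ⟨le_rfl, h0⟩ ⟨h0, le_rfl⟩ h0
  have hF0 : F 0 = 0 := by simp [hF]
  rw [hF0] at h
  simp only [hF] at h
  linarith

lemma fcf_pos {p : ℝ} (hp : p ∈ Ioo (0:ℝ) 1) : 0 < 43/48 - 17/8*p + 25/16*p^2 - p^3/3 := by
  have h : 43/48 - 17/8*p + 25/16*p^2 - p^3/3 = (1-p)^2*(9/16 + (1-p)/3) := by ring
  rw [h]
  have h1 : (0:ℝ) < 1 - p := by linarith [hp.2]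
  positivity

lemma psi_nonneg {p : ℝ} (hp : p ∈ Ioo (0:ℝ) 1) :
    43/48 - 17/8*p + 25/16*p^2 - p^3/3 ≤
      (15/8+p)*(17/8-p)*(23/8*(Real.log (23/8) - Real.log (15/8+p)) - (1-p)) := by
  obtain ⟨hp0, hp1⟩ := hp
  set x : ℝ := 8*(1-p)/23 with hx
  have hx0 : 0 ≤ x := by rw [hx]; apply div_nonneg (by linarith) (by norm_num)
  have hx1 : x < 1 := by rw [hx]; rw [div_lt_one (by norm_num)]; linarith
  have hlog := log_lb5 hx0 hx1
  have hle : Real.log (23/8) - Real.log (15/8+p) = -Real.log (1-x) := by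
    have h1 : (1:ℝ) - x = (15/8+p)/(23/8) := by rw [hx]; ring
    rw [h1]
    have h2 : Real.log ((15/8+p)/(23/8)) = Real.log (15/8+p) - Real.log (23/8) :=
      Real.log_div (ne_of_gt (by linarith)) (by norm_num)
    rw [h2]
    ring
  rw [hle]
  have hmul : (0:ℝ) ≤ (15/8+p)*(17/8-p) := by nlinarith
  have hkey : 43/48 - 17/8*p + 25/16*p^2 - p^3/3 ≤
      (15/8+p)*(17/8-p)*(23/8*(x + x^2/2 + x^3/3 + x^4/4 + x^5/5) - (1-p)) := by
    have hident : (15/8+p)*(17/8-p)*(23/8*(x + x^2/2 + x^3/3 + x^4/4 + x^5/5) - (1-p))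
        - (43/48 - 17/8*p + 25/16*p^2 - p^3/3)
        = 7/69*(1-p)^3 - 110/1587*(1-p)^4 - 2272/182505*(1-p)^5
          - 7552/1399205*(1-p)^6 - 4096/1399205*(1-p)^7 := by
      rw [hx]; ring
    have hq0 : (0:ℝ) ≤ 1 - p := by linarith
    have hq1 : (1:ℝ) - p ≤ 1 := by linarith
    have t3 : (0:ℝ) ≤ (1-p)^3 := by positivity
    have t4 : (1-p)^4 ≤ (1-p)^3 := pow_le_pow_of_le_one hq0 hq1 (by norm_num)
    have t5 : (1-p)^5 ≤ (1-p)^3 := pow_le_pow_of_le_one hq0 hq1 (by norm_num)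
    have t6 : (1-p)^6 ≤ (1-p)^3 := pow_le_pow_of_le_one hq0 hq1 (by norm_num)
    have t7 : (1-p)^7 ≤ (1-p)^3 := pow_le_pow_of_le_one hq0 hq1 (by norm_num)
    linarith
  calc 43/48 - 17/8*p + 25/16*p^2 - p^3/3
      ≤ (15/8+p)*(17/8-p)*(23/8*(x + x^2/2 + x^3/3 + x^4/4 + x^5/5) - (1-p)) := hkey
    _ ≤ (15/8+p)*(17/8-p)*(23/8*(-Real.log (1-x)) - (1-p)) := by
        apply mul_le_mul_of_nonneg_left _ hmul
        linarith

lemma dmrl_core : MonotoneOn (fun p : ℝ =>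
    (23/8*(Real.log (23/8) - Real.log (15/8+p)) - (1-p)) /
      (43/48 - 17/8*p + 25/16*p^2 - p^3/3)) (Ioo (0:ℝ) 1) := by
  set g : ℝ → ℝ := fun p => 23/8*(Real.log (23/8) - Real.log (15/8+p)) - (1-p) with hg
  set f : ℝ → ℝ := fun p => 43/48 - 17/8*p + 25/16*p^2 - p^3/3 with hf
  have hasg : ∀ p ∈ Ioo (0:ℝ) 1, HasDerivAt g ((p-1)/(15/8+p)) p := by
    intro p hp
    have hpos : (0:ℝ) < 15/8 + p := by linarith [hp.1]
    have hne : (15/8 + p : ℝ) ≠ 0 := ne_of_gt hpos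
    have hlog : HasDerivAt (fun p : ℝ => Real.log (15/8+p)) (1/(15/8+p)) p := by
      have h1 : HasDerivAt (fun p : ℝ => 15/8 + p) 1 p := (hasDerivAt_id p).const_add _
      have h := (Real.hasDerivAt_log hne).comp p h1
      refine h.congr_deriv (Eq.symm ?_)
      simp
    have h := ((hlog.const_sub (Real.log (23/8))).const_mul (23/8:ℝ)).sub
      ((hasDerivAt_id p).const_sub 1)
    rw [hg]
    refine h.congr_deriv (Eq.symm ?_)
    rw [eq_sub_iff_add_eq, div_add' _ _ _ hne, mul_neg, mul_one_div, ← neg_div,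
      div_eq_div_iff hne hne]
    ring
  have hasf : ∀ p : ℝ, HasDerivAt f (-(17/8) + 25/8*p - p^2) p := by
    intro p
    have h := ((((hasDerivAt_id p).const_mul (17/8:ℝ)).const_sub (43/48:ℝ)).add
      ((hasDerivAt_pow 2 p).const_mul (25/16:ℝ))).sub ((hasDerivAt_pow 3 p).div_const 3)
    rw [hf]
    refine h.congr_deriv (Eq.symm ?_)
    push_cast
    ring
  have hasr : ∀ p ∈ Ioo (0:ℝ) 1, HasDerivAt (fun p => g p / f p)
      ((((p-1)/(15/8+p)) * f p - g p * (-(17/8) + 25/8*p - p^2)) / (f p)^2) p := by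
    intro p hp
    exact (hasg p hp).div (hasf p) (ne_of_gt (fcf_pos hp))
  apply monotoneOn_of_deriv_nonneg (convex_Ioo 0 1)
  · intro p hp
    exact ((hasr p hp).differentiableAt).continuousAt.continuousWithinAt
  · intro p hp
    rw [interior_Ioo] at hp
    exact ((hasr p hp).differentiableAt).differentiableWithinAt
  · intro p hp
    rw [interior_Ioo] at hp
    rw [(hasr p hp).deriv]
    apply div_nonneg _ (sq_nonneg _)
    have hpos : (0:ℝ) < 15/8 + p := by linarith [hp.1]
    have hne : (15/8 + p : ℝ) ≠ 0 := ne_of_gt hpos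
    have hψ := psi_nonneg hp
    have h1p : (0:ℝ) ≤ 1 - p := by linarith [hp.2]
    have hiden : ((p-1)/(15/8+p)) * f p - g p * (-(17/8) + 25/8*p - p^2)
        = (1-p) * ((15/8+p)*(17/8-p)*g p - f p) / (15/8+p) := by
      rw [hf, hg]
      rw [div_mul_eq_mul_div, div_sub' hne, div_eq_div_iff hne hne]
      ring
    rw [hiden]
    apply div_nonneg _ (le_of_lt hpos)
    apply mul_nonneg h1p
    rw [hf, hg]
    linarith [hψ]

lemma hb1 : (426910823/1000000000 : ℝ) ≤ Real.log (23/8) - Real.log (15/8 + 1/1000) := by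
  have h := Real.abs_log_sub_add_sum_range_le (x := (999/2875:ℝ))
    (by rw [abs_of_pos] <;> norm_num) 21
  rw [abs_of_pos (by norm_num : (0:ℝ) < 999/2875), abs_le] at h
  have heq : Real.log (23/8) - Real.log (15/8 + 1/1000) = -Real.log (1 - 999/2875) := by
    have h1 : (1:ℝ) - 999/2875 = (15/8 + 1/1000)/(23/8) := by norm_num
    rw [h1]
    have h2 : Real.log ((15/8 + 1/1000)/(23/8)) = Real.log (15/8 + 1/1000) - Real.log (23/8) :=
      Real.log_div (by norm_num) (by norm_num)
    rw [h2]; ring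
  rw [heq]
  have h2 := h.2
  have hnum : (426910823/1000000000 : ℝ) ≤
      (∑ i ∈ Finset.range 21, (999/2875:ℝ)^(i+1)/(i+1)) - (999/2875)^(21+1)/(1 - 999/2875) := by
    simp only [Finset.sum_range_succ, Finset.sum_range_zero]
    norm_num
  linarith

lemma hb2 : Real.log (23/8) - Real.log (15/8 + 1/200) ≤ (424780898/1000000000 : ℝ) := by
  have h := Real.abs_log_sub_add_sum_range_le (x := (199/575:ℝ))
    (by rw [abs_of_pos] <;> norm_num) 21
  rw [abs_of_pos (by norm_num : (0:ℝ) < 199/575), abs_le] at h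
  have heq : Real.log (23/8) - Real.log (15/8 + 1/200) = -Real.log (1 - 199/575) := by
    have h1 : (1:ℝ) - 199/575 = (15/8 + 1/200)/(23/8) := by norm_num
    rw [h1]
    have h2 : Real.log ((15/8 + 1/200)/(23/8)) = Real.log (15/8 + 1/200) - Real.log (23/8) :=
      Real.log_div (by norm_num) (by norm_num)
    rw [h2]; ring
  rw [heq]
  have h1 := h.1
  have hnum : (∑ i ∈ Finset.range 21, (199/575:ℝ)^(i+1)/(i+1)) + (199/575)^(21+1)/(1 - 199/575)
      ≤ (424780898/1000000000 : ℝ) := by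
    simp only [Finset.sum_range_succ, Finset.sum_range_zero]
    norm_num
  linarith

/-- **Example 1.**  The dmrl order is not preserved by all distortion functions: the
random variables `X`, `Y` with quantile functions `F⁻¹(p) = (17/8) p - (1/2) p²` and
`G⁻¹(p) = ln(15/8 + p)` satisfy `X ≤_dmrl Y`, but for the distortion `h(p) = p⁵` the
comparison `X_h ≤_dmrl Y_h` fails. -/
theorem dmrl_not_preserved_by_all_distortions :
    (∀ p ∈ Ioo (0:ℝ) 1, quantile Fex p = 17/8 * p - 1/2 * p ^ 2) ∧
    (∀ p ∈ Ioo (0:ℝ) 1, quantile Gex p = Real.log (15/8 + p)) ∧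
    DMRL_le Fex Gex ∧
    ¬ DMRL_le (distortedCDF (fun p => p ^ 5) Fex) (distortedCDF (fun p => p ^ 5) Gex) := by
  refine ⟨fun p hp => quantile_Fex hp, fun p hp => quantile_Gex hp, ?_, ?_⟩
  · -- DMRL_le Fex Gex
    unfold DMRL_le
    intro a ha b hb hab
    have hva := ewF_val ha
    have hvb := ewF_val hb
    have hwa := ewG_val ha
    have hwb := ewG_val hb
    have h := dmrl_core ha hb hab
    simp only at h ⊢
    rw [hva, hwa, hvb, hwb]
    exact h
  · -- failure for the distortion p ^ 5
    intro hmono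
    unfold DMRL_le at hmono
    have hu1 : (1/1000 : ℝ) ∈ Ioo (0:ℝ) 1 := by norm_num
    have hu2 : (1/200 : ℝ) ∈ Ioo (0:ℝ) 1 := by norm_num
    have hp1 : (1 - (1 - 1/1000 : ℝ)^5) ∈ Ioo (0:ℝ) 1 := by norm_num
    have hp2 : (1 - (1 - 1/200 : ℝ)^5) ∈ Ioo (0:ℝ) 1 := by norm_num
    have hle : (1 - (1 - 1/1000 : ℝ)^5) ≤ (1 - (1 - 1/200 : ℝ)^5) := by norm_num
    have h := hmono hp1 hp2 hle
    simp only at h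
    have e1F := ewFh_val hu1
    have e2F := ewFh_val hu2
    have e1G := ewGh_val hu1
    have e2G := ewGh_val hu2
    rw [show (fun p => p^5 : ℝ → ℝ) = (fun q => q^5) from rfl] at h
    rw [e1F, e2F, e1G, e2G] at h
    rw [div_le_div_iff₀ (by norm_num) (by norm_num)] at h
    have hc5 : (0:ℝ) ≤ (23/8)^5 := by norm_num
    simp only [Pp] at h
    nlinarith [hb1, hb2, h]
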